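/- Fix a positive integer c, α > 0, and p, q ∈ [0,1] with p ≤ q and (1-p)α < c. Let E(r) = (1-r)α + α^{c+1}(1-r)^{c+1} P₀(r)/(c·c!(1-(1-r)α/c)²) denote the mean M/M/c population at load (1-r)α. Then E(p) ≥ E(q), i.e., E is monotone nonincreasing on {r ∈ [0,1] : (1-r)α < c}. -/

import Mathlib

open Finset

private lemma D_pos (c : ℕ) (hc : 0 < c) (t : ℝ) (ht : 0 ≤ t) (htc : t < c) :
    0 < ∑ i ∈ Finset.range c, t ^ i / (Nat.factorial i : ℝ) +
      t ^ c / ((Nat.factorial c : ℝ) * (1 - t / c)) := by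
  have hc' : (0:ℝ) < c := by exact_mod_cast hc
  have h1 : (0:ℝ) < 1 - t / c := by
    have : t / c < 1 := (div_lt_one hc').mpr htc
    linarith
  have h2 : 0 ≤ t ^ c / ((Nat.factorial c : ℝ) * (1 - t / c)) := by positivity
  have h3 : (1:ℝ) ≤ ∑ i ∈ Finset.range c, t ^ i / (Nat.factorial i : ℝ) := by
    have := Finset.single_le_sum (f := fun i => t ^ i / (Nat.factorial i : ℝ))
      (fun i _ => by positivity) (Finset.mem_range.mpr hc)
    simpa using this
  linarith

private lemma main_ineq (c : ℕ) (hc : 0 < c) (x y : ℝ) (hx : 0 ≤ x) (hxy : x ≤ y)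
    (hy : y < (c:ℝ)) :
    x + x ^ (c+1) * (∑ i ∈ Finset.range c, x ^ i / (Nat.factorial i : ℝ) +
        x ^ c / ((Nat.factorial c : ℝ) * (1 - x / c)))⁻¹ /
        ((c:ℝ) * (Nat.factorial c : ℝ) * (1 - x / c) ^ 2)
    ≤ y + y ^ (c+1) * (∑ i ∈ Finset.range c, y ^ i / (Nat.factorial i : ℝ) +
        y ^ c / ((Nat.factorial c : ℝ) * (1 - y / c)))⁻¹ /
        ((c:ℝ) * (Nat.factorial c : ℝ) * (1 - y / c) ^ 2) := by
  have hc' : (0:ℝ) < c := by exact_mod_cast hc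
  have hxc : x < (c:ℝ) := lt_of_le_of_lt hxy hy
  have hy0 : 0 ≤ y := le_trans hx hxy
  have h1x : (0:ℝ) < 1 - x / c := by
    have : x / c < 1 := (div_lt_one hc').mpr hxc
    linarith
  have h1y : (0:ℝ) < 1 - y / c := by
    have : y / c < 1 := (div_lt_one hc').mpr hy
    linarith
  have hDx := D_pos c hc x hx hxc
  have hDy := D_pos c hc y hy0 hy
  set Sx := ∑ i ∈ Finset.range c, x ^ i / (Nat.factorial i : ℝ) with hSx
  set Sy := ∑ i ∈ Finset.range c, y ^ i / (Nat.factorial i : ℝ) with hSy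
  set Dx := Sx + x ^ c / ((Nat.factorial c : ℝ) * (1 - x / c)) with hDxdef
  set Dy := Sy + y ^ c / ((Nat.factorial c : ℝ) * (1 - y / c)) with hDydef
  set Ax := (c:ℝ) * (Nat.factorial c : ℝ) * (1 - x / c) ^ 2 with hAxdef
  set Ay := (c:ℝ) * (Nat.factorial c : ℝ) * (1 - y / c) ^ 2 with hAydef
  have hfacpos : (0:ℝ) < (Nat.factorial c : ℝ) := by positivity
  have hAx : 0 < Ax := by rw [hAxdef]; positivity
  have hAy : 0 < Ay := by rw [hAydef]; positivity
  have hrw : ∀ (a b d : ℝ), a * b⁻¹ / d = a / (d * b) := by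
    intro a b d
    rw [div_eq_mul_inv, div_eq_mul_inv, mul_inv]
    ring
  rw [hrw, hrw]
  have hgoal : x ^ (c+1) / (Ax * Dx) ≤ y ^ (c+1) / (Ay * Dy) := by
    rw [div_le_div_iff₀ (by positivity) (by positivity)]
    -- expand A * D
    have hsq : ∀ t : ℝ, 0 < 1 - t / c →
        ((c:ℝ) * (Nat.factorial c : ℝ) * (1 - t / c) ^ 2) *
          (t ^ c / ((Nat.factorial c : ℝ) * (1 - t / c))) = (c:ℝ) * (1 - t / c) * t ^ c := by
      intro t ht
      rw [mul_comm, div_mul_eq_mul_div, div_eq_iff (by positivity)]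
      ring
    have expandx : Ax * Dx = (c:ℝ) * (Nat.factorial c : ℝ) * (1 - x / c) ^ 2 * Sx
        + (c:ℝ) * (1 - x / c) * x ^ c := by
      rw [hAxdef, hDxdef, mul_add, hsq x h1x]
    have expandy : Ay * Dy = (c:ℝ) * (Nat.factorial c : ℝ) * (1 - y / c) ^ 2 * Sy
        + (c:ℝ) * (1 - y / c) * y ^ c := by
      rw [hAydef, hDydef, mul_add, hsq y h1y]
    rw [expandx, expandy, mul_add, mul_add]
    have hsub : 1 - y / c ≤ 1 - x / c := by
      have : x / c ≤ y / c := by gcongr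
      linarith
    apply add_le_add
    · -- sum part
      rw [hSx, hSy, Finset.mul_sum, Finset.mul_sum, Finset.mul_sum, Finset.mul_sum]
      apply Finset.sum_le_sum
      intro i hi
      have hi' : i < c := Finset.mem_range.mp hi
      have key : x ^ (c+1) * (1 - y / c) ^ 2 * y ^ i ≤ y ^ (c+1) * (1 - x / c) ^ 2 * x ^ i := by
        have hxp : x ^ (c+1) = x ^ i * x ^ (c+1-i) := by
          rw [← pow_add]; congr 1; omega
        have hyp : y ^ (c+1) = y ^ i * y ^ (c+1-i) := by
          rw [← pow_add]; congr 1; omega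
        have h2 : x ^ (c+1-i) * (1 - y / c) ^ 2 ≤ y ^ (c+1-i) * (1 - x / c) ^ 2 := by
          apply mul_le_mul (pow_le_pow_left₀ hx hxy _)
            (pow_le_pow_left₀ h1y.le hsub 2) (by positivity) (by positivity)
        calc x ^ (c+1) * (1 - y / c) ^ 2 * y ^ i
            = (x ^ i * y ^ i) * (x ^ (c+1-i) * (1 - y / c) ^ 2) := by rw [hxp]; ring
          _ ≤ (x ^ i * y ^ i) * (y ^ (c+1-i) * (1 - x / c) ^ 2) := by
              apply mul_le_mul_of_nonneg_left h2 (by positivity)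
          _ = y ^ (c+1) * (1 - x / c) ^ 2 * x ^ i := by rw [hyp]; ring
      calc x ^ (c+1) * ((c:ℝ) * (Nat.factorial c : ℝ) * (1 - y / c) ^ 2 * (y ^ i / (Nat.factorial i : ℝ)))
          = ((c:ℝ) * (Nat.factorial c : ℝ) / (Nat.factorial i : ℝ)) *
              (x ^ (c+1) * (1 - y / c) ^ 2 * y ^ i) := by ring
        _ ≤ ((c:ℝ) * (Nat.factorial c : ℝ) / (Nat.factorial i : ℝ)) *
              (y ^ (c+1) * (1 - x / c) ^ 2 * x ^ i) := by
            apply mul_le_mul_of_nonneg_left key (by positivity)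
        _ = y ^ (c+1) * ((c:ℝ) * (Nat.factorial c : ℝ) * (1 - x / c) ^ 2 * (x ^ i / (Nat.factorial i : ℝ))) := by
            ring
    · -- boundary part
      have h : x * (1 - y / c) ≤ y * (1 - x / c) := by
        have hid : x * (1 - y / c) - y * (1 - x / c) = x - y := by
          field_simp
          ring
        linarith [hxy, hid]
      calc x ^ (c+1) * ((c:ℝ) * (1 - y / c) * y ^ c)
          = ((c:ℝ) * (x ^ c * y ^ c)) * (x * (1 - y / c)) := by rw [pow_succ]; ring
        _ ≤ ((c:ℝ) * (x ^ c * y ^ c)) * (y * (1 - x / c)) := by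
            apply mul_le_mul_of_nonneg_left h (by positivity)
        _ = y ^ (c+1) * ((c:ℝ) * (1 - x / c) * x ^ c) := by rw [pow_succ]; ring
  exact add_le_add hxy hgoal

/-- The mean M/M/c population `E(r)` at load `(1-r)α` is nonincreasing:
for `p ≤ q` in `[0,1]` with `(1-p)α < c` (hence also `(1-q)α < c`), `E(p) ≥ E(q)`. -/
theorem stmt18 (c : ℕ) (hc : 0 < c) (α : ℝ) (hα : 0 < α)
    (P0 : ℝ → ℝ)
    (hP0 : ∀ r, P0 r = (∑ i ∈ Finset.range c, ((1 - r) * α) ^ i / (Nat.factorial i : ℝ) +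
        ((1 - r) * α) ^ c / ((Nat.factorial c : ℝ) * (1 - (1 - r) * α / c)))⁻¹)
    (E : ℝ → ℝ)
    (hE : ∀ r, E r = (1 - r) * α +
        α ^ (c + 1) * (1 - r) ^ (c + 1) * P0 r /
          ((c : ℝ) * (Nat.factorial c : ℝ) * (1 - (1 - r) * α / c) ^ 2))
    (p q : ℝ) (hpmem : p ∈ Set.Icc (0:ℝ) 1) (hqmem : q ∈ Set.Icc (0:ℝ) 1)
    (hpq : p ≤ q) (hp : (1 - p) * α < c) :
    E q ≤ E p := by
  obtain ⟨hq0, hq1⟩ := hqmem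
  have hx : 0 ≤ (1 - q) * α := by
    apply mul_nonneg (by linarith) hα.le
  have hxy : (1 - q) * α ≤ (1 - p) * α := by
    apply mul_le_mul_of_nonneg_right (by linarith) hα.le
  have := main_ineq c hc ((1 - q) * α) ((1 - p) * α) hx hxy hp
  rw [hE p, hE q, hP0 p, hP0 q]
  rw [show α ^ (c+1) * (1 - q) ^ (c+1) = ((1 - q) * α) ^ (c+1) by rw [mul_pow]; ring]
  rw [show α ^ (c+1) * (1 - p) ^ (c+1) = ((1 - p) * α) ^ (c+1) by rw [mul_pow]; ring]
  exact this
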